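/- In the setting of the extension theorem on Skorokhod space: for ω ∈ 𝔻 and n ∈ ℕ, the atom of the σ-field D_n = σ(X_s, s ∈ [0,n]) containing ω equals the set of all paths agreeing with ω on [0,n], i.e. ⋂{B ∈ D_n : ω ∈ B} = {ω' ∈ 𝔻 : ω'(s) = ω(s) for all s ∈ [0,n]}. -/
import Mathlib


open MeasureTheory Set Filter

/-- A function `f : [0,∞) → β` is càdlàg: right-continuous with left limits. -/
def IsCadlag {β : Type*} [TopologicalSpace β] (f : NNReal → β) : Prop :=
  (∀ t, ContinuousWithinAt f (Ici t) t) ∧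
    ∀ t, 0 < t → ∃ L, Tendsto f (nhdsWithin t (Iio t)) (nhds L)

/-- The Skorokhod path space `𝔻 = D([0,∞), B)` of càdlàg paths into `B`. -/
def Skor (B : Type*) [NormedAddCommGroup B] : Type _ :=
  {f : NNReal → B // IsCadlag f}

/-- for `ω ∈ 𝔻` and `n ∈ ℕ`, the atom of `D_n = σ(X_s, s ∈ [0,n])`
containing `ω` is exactly the set of paths agreeing with `ω` on `[0,n]`:
`⋂ {A ∈ D_n : ω ∈ A} = {ω' : ω'(s) = ω(s) for all s ∈ [0,n]}`. -/
theorem atom_of_canonical_sigma_field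
    {B : Type*} [NormedAddCommGroup B] [NormedSpace ℝ B]
    [MeasurableSpace B] [BorelSpace B]
    (n : ℕ) (ω : Skor B) :
    ⋂₀ {A : Set (Skor B) |
        MeasurableSet[⨆ s ∈ {s : NNReal | s ≤ (n : NNReal)},
          MeasurableSpace.comap (fun ω' : Skor B => ω'.1 s) inferInstance] A ∧ ω ∈ A} =
      {ω' : Skor B | ∀ s : NNReal, s ≤ (n : NNReal) → ω'.1 s = ω.1 s} := by
  set m : MeasurableSpace (Skor B) := ⨆ s ∈ {s : NNReal | s ≤ (n : NNReal)},
      MeasurableSpace.comap (fun ω' : Skor B => ω'.1 s) inferInstance with hm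
  ext ω''
  simp only [Set.mem_sInter, Set.mem_setOf_eq]
  constructor
  · intro h s hs
    have h1 : MeasurableSet[MeasurableSpace.comap (fun ω' : Skor B => ω'.1 s) inferInstance]
        {ω' : Skor B | ω'.1 s = ω.1 s} :=
      ⟨{ω.1 s}, measurableSet_singleton _, rfl⟩
    have h2 : MeasurableSet[m] {ω' : Skor B | ω'.1 s = ω.1 s} := by
      have hle : MeasurableSpace.comap (fun ω' : Skor B => ω'.1 s) inferInstance ≤ m := by
        rw [hm]
        exact le_iSup₂ (f := fun s (_ : s ∈ {s : NNReal | s ≤ (n : NNReal)}) =>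
          MeasurableSpace.comap (fun ω' : Skor B => ω'.1 s) inferInstance) s hs
      exact hle _ h1
    exact h _ ⟨h2, rfl⟩
  · intro h A hA
    obtain ⟨hAm, hωA⟩ := hA
    set Φ : Skor B → ({s : NNReal | s ≤ (n : NNReal)} → B) := fun ω' s => ω'.1 s with hΦ
    have hle : m ≤ MeasurableSpace.comap Φ MeasurableSpace.pi := by
      rw [hm]
      apply iSup₂_le
      intro s hs
      have : (fun ω' : Skor B => ω'.1 s)
          = (fun g : {s : NNReal | s ≤ (n : NNReal)} → B => g ⟨s, hs⟩) ∘ Φ := rfl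
      rw [this, ← MeasurableSpace.comap_comp]
      exact MeasurableSpace.comap_mono
        ((measurable_pi_apply (⟨s, hs⟩ : {s : NNReal | s ≤ (n : NNReal)})).comap_le)
    obtain ⟨S, _, rfl⟩ := hle A hAm
    have hΦeq : Φ ω'' = Φ ω := funext fun s => h s s.2
    show Φ ω'' ∈ S
    rw [hΦeq]
    exact hωA
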